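/- Let G_w be a weighted graph containing a pendant vertex v whose unique neighbor is u. Then i_+(G_w) = i_+(G_w − u − v) + 1 and i_-(G_w) = i_-(G_w − u − v) + 1, where G_w − u − v is the weighted graph induced on the vertices other than u and v (with the same weights on the remaining edges). -/

import Mathlib

open Matrix

/-- The positive inertia index of a matrix: the number of positive eigenvalues
(counted with multiplicity) if the matrix is Hermitian, and `0` otherwise. -/
noncomputable def posInertia {k 𝕜 : Type*} [RCLike 𝕜] [Fintype k] [DecidableEq k]
    (A : Matrix k k 𝕜) : ℕ :=
  if h : A.IsHermitian then Fintype.card {i // 0 < h.eigenvalues i} else 0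

/-- The negative inertia index of a matrix. -/
noncomputable def negInertia {k 𝕜 : Type*} [RCLike 𝕜] [Fintype k] [DecidableEq k]
    (A : Matrix k k 𝕜) : ℕ :=
  if h : A.IsHermitian then Fintype.card {i // h.eigenvalues i < 0} else 0

/-- The nullity of a matrix: the number of zero eigenvalues. -/
noncomputable def nulInertia {k 𝕜 : Type*} [RCLike 𝕜] [Fintype k] [DecidableEq k]
    (A : Matrix k k 𝕜) : ℕ :=
  if h : A.IsHermitian then Fintype.card {i // h.eigenvalues i = 0} else 0

/-- A weighted graph: a simple graph together with a symmetric weight function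
which is positive on all edges. -/
structure WeightedGraph (V : Type*) where
  G : SimpleGraph V
  w : V → V → ℝ
  symm : ∀ u v : V, w u v = w v u
  pos : ∀ u v : V, G.Adj u v → 0 < w u v

open Classical in
/-- The (weighted) adjacency matrix of a weighted graph. -/
noncomputable def WeightedGraph.adjMatrix {V : Type*} [Fintype V] [DecidableEq V]
    (W : WeightedGraph V) : Matrix V V ℝ :=
  fun a b => if W.G.Adj a b then W.w a b else 0

/-- `i₊`, the number of positive eigenvalues of the adjacency matrix. -/
noncomputable def WeightedGraph.iPos {V : Type*} [Fintype V] [DecidableEq V]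
    (W : WeightedGraph V) : ℕ := posInertia W.adjMatrix

/-- `i₋`, the number of negative eigenvalues of the adjacency matrix. -/
noncomputable def WeightedGraph.iNeg {V : Type*} [Fintype V] [DecidableEq V]
    (W : WeightedGraph V) : ℕ := negInertia W.adjMatrix

/-- `i₀`, the number of zero eigenvalues of the adjacency matrix. -/
noncomputable def WeightedGraph.iNul {V : Type*} [Fintype V] [DecidableEq V]
    (W : WeightedGraph V) : ℕ := nulInertia W.adjMatrix

/-- A weighted graph is bicyclic if its underlying graph is connected and has
exactly one more edge than vertices. -/
def WeightedGraph.IsBicyclic {V : Type*} [Fintype V] (W : WeightedGraph V) : Prop :=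
  W.G.Connected ∧ W.G.edgeSet.ncard = Fintype.card V + 1

/-- The graph has a pendant vertex (a vertex of degree one). -/
def WeightedGraph.HasPendant {V : Type*} (W : WeightedGraph V) : Prop :=
  ∃ x : V, (W.G.neighborSet x).ncard = 1

/-- The graph has no pendant vertices. -/
def WeightedGraph.NoPendant {V : Type*} (W : WeightedGraph V) : Prop :=
  ∀ x : V, (W.G.neighborSet x).ncard ≠ 1

/-- The base of `G` is (isomorphic to) `H`: some induced subgraph of `G` is
isomorphic to `H`.  (For a bicyclic graph `G` and a bicyclic graph `H` without
pendant vertices this induced subgraph is necessarily the unique base of `G`.) -/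
def BaseIsoTo {V B : Type*} (G : SimpleGraph V) (H : SimpleGraph B) : Prop :=
  ∃ S : Set V, Nonempty ((G.induce S) ≃g H)

/-- Vertex labels of the connecting path of `∞(p,l,q)`: the path starts at the
vertex `0` of the first cycle `0, 1, …, p-1`, and its further vertices are
`p, p+1, …`. -/
def pathVert (p j : ℕ) : ℕ := if j = 0 then 0 else p - 1 + j

/-- Vertex labels of the second cycle of `∞(p,l,q)`: it starts at the last
vertex of the connecting path and continues with `p+l-1, p+l, …`. -/
def infCyc2Vert (p l k : ℕ) : ℕ := if k = 0 then pathVert p (l - 1) else p + l - 2 + k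

/-- The edge relation of `∞(p,l,q)` on the vertex labels `0, …, p+q+l-3`:
the first cycle on `0, …, p-1`, the connecting path (on `l` vertices) from the
vertex `0`, and the second cycle attached at the last path vertex. -/
def infinityRel (p l q a b : ℕ) : Prop :=
  (a + 1 < p ∧ b = a + 1) ∨ (a = 0 ∧ b = p - 1) ∨
  (∃ j, j + 1 < l ∧ a = pathVert p j ∧ b = pathVert p (j + 1)) ∨
  (∃ k, k + 1 < q ∧ a = infCyc2Vert p l k ∧ b = infCyc2Vert p l (k + 1)) ∨
  (a = infCyc2Vert p l 0 ∧ b = infCyc2Vert p l (q - 1))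

/-- The graph `∞(p,l,q)`: two vertex-disjoint cycles of lengths `p` and `q`
joined by a path on `l` vertices (whose endpoints are identified with one
vertex on each cycle).  It has `p + q + l - 2` vertices. -/
def infinityGraph (p l q : ℕ) : SimpleGraph (Fin (p + q + l - 2)) :=
  SimpleGraph.fromRel (fun a b => infinityRel p l q a.1 b.1)

/-- The edge relation of one of the three `u,v`-paths of `θ(p,l,q)` having `m`
internal vertices, the internal vertices being labelled `o, o+1, …, o+m-1`
(`u` is the vertex `0` and `v` is the vertex `1`). -/
def thetaPathRel (m o a b : ℕ) : Prop :=
  if m = 0 then a = 0 ∧ b = 1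
  else (a = 0 ∧ b = o) ∨ (∃ i, i + 1 < m ∧ a = o + i ∧ b = o + i + 1) ∨ (a = o + m - 1 ∧ b = 1)

/-- The graph `θ(p,l,q)`: two vertices `u = 0` and `v = 1` joined by three
internally disjoint paths with `p`, `l`, `q` internal vertices respectively.
It has `p + l + q + 2` vertices. -/
def thetaGraph (p l q : ℕ) : SimpleGraph (Fin (p + l + q + 2)) :=
  SimpleGraph.fromRel (fun a b =>
    thetaPathRel p 2 a.1 b.1 ∨ thetaPathRel l (p + 2) a.1 b.1 ∨
      thetaPathRel q (p + l + 2) a.1 b.1)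

/-- The edge set of `G` is exactly the (symmetrized) list `E`. -/
def adjSpec {V : Type*} (G : SimpleGraph V) (E : List (V × V)) : Prop :=
  ∀ a b : V, G.Adj a b ↔ ((a, b) ∈ E ∨ (b, a) ∈ E)

/-- The weighted subgraph induced on a set `S` of vertices. -/
def WeightedGraph.induce {V : Type*} (W : WeightedGraph V) (S : Set V) : WeightedGraph S where
  G := W.G.induce S
  w := fun a b => W.w a b
  symm := fun a b => W.symm a b
  pos := fun a b h => W.pos a b h

/-- The `k`-th vertex (mod `n`) of a cycle on `Fin n`. -/
def cycVert (n : ℕ) (hn : 0 < n) (k : ℕ) : Fin n := ⟨k % n, Nat.mod_lt _ hn⟩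

/-- `W` is the weighted graph `θ(1,1,1)` (i.e. `K_{2,3}`) with parts `{u, v}`
and `{x1, x2, x3}`. -/
def Theta111Shape {V : Type*} (W : WeightedGraph V) (u v x1 x2 x3 : V) : Prop :=
  [u, v, x1, x2, x3].Nodup ∧ (∀ z : V, z ∈ [u, v, x1, x2, x3]) ∧
    adjSpec W.G [(u, x1), (u, x2), (u, x3), (x1, v), (x2, v), (x3, v)]

/-- `W` is the weighted graph `θ(1,0,1)` on vertices `u, v, x1, x2` with edges
`uv, ux1, x1v, ux2, x2v`. -/
def Theta101Shape {V : Type*} (W : WeightedGraph V) (u v x1 x2 : V) : Prop :=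
  [u, v, x1, x2].Nodup ∧ (∀ z : V, z ∈ [u, v, x1, x2]) ∧
    adjSpec W.G [(u, v), (u, x1), (x1, v), (u, x2), (x2, v)]

/-- `W` is the weighted graph `θ(1,0,2)` on vertices `u, v, x, y, z` with edges
`uv, ux, xv, uy, yz, zv`. -/
def Theta102Shape {V : Type*} (W : WeightedGraph V) (u v x y z : V) : Prop :=
  [u, v, x, y, z].Nodup ∧ (∀ t : V, t ∈ [u, v, x, y, z]) ∧
    adjSpec W.G [(u, v), (u, x), (x, v), (u, y), (y, z), (z, v)]

/-- `W` is the weighted graph `θ(2,0,2)` on vertices `u, v, x1, x2, y1, y2`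
with edges `uv, ux1, x1x2, x2v, uy1, y1y2, y2v`. -/
def Theta202Shape {V : Type*} (W : WeightedGraph V) (u v x1 x2 y1 y2 : V) : Prop :=
  [u, v, x1, x2, y1, y2].Nodup ∧ (∀ t : V, t ∈ [u, v, x1, x2, y1, y2]) ∧
    adjSpec W.G [(u, v), (u, x1), (x1, x2), (x2, v), (u, y1), (y1, y2), (y2, v)]

/-- `W` is the weighted graph `θ(1,1,2)` on vertices `u, v, x1, x2, y1, y2`
with edges `ux1, x1v, ux2, x2v, uy1, y1y2, y2v`. -/
def Theta112Shape {V : Type*} (W : WeightedGraph V) (u v x1 x2 y1 y2 : V) : Prop :=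
  [u, v, x1, x2, y1, y2].Nodup ∧ (∀ t : V, t ∈ [u, v, x1, x2, y1, y2]) ∧
    adjSpec W.G [(u, x1), (x1, v), (u, x2), (x2, v), (u, y1), (y1, y2), (y2, v)]

/-- `W` is the weighted graph `∞(3,1,3)`: two triangles sharing the vertex `c`. -/
def Inf313Shape {V : Type*} (W : WeightedGraph V) (c a1 a2 b1 b2 : V) : Prop :=
  [c, a1, a2, b1, b2].Nodup ∧ (∀ t : V, t ∈ [c, a1, a2, b1, b2]) ∧
    adjSpec W.G [(c, a1), (a1, a2), (a2, c), (c, b1), (b1, b2), (b2, c)]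

/-- `W` is the weighted graph `∞(3,2,3)`: the triangle `u,x,y` and the triangle
`v,s,t`, joined by the edge `uv`. -/
def Inf323Shape {V : Type*} (W : WeightedGraph V) (u v x y s t : V) : Prop :=
  [u, v, x, y, s, t].Nodup ∧ (∀ z : V, z ∈ [u, v, x, y, s, t]) ∧
    adjSpec W.G [(u, x), (x, y), (y, u), (v, s), (s, t), (t, v), (u, v)]

/-- `W` is the weighted graph `∞(3,1,4)`: the triangle `c,x,y` and the
quadrilateral `c,z1,z2,z3` sharing the vertex `c`. -/
def Inf314Shape {V : Type*} (W : WeightedGraph V) (c x y z1 z2 z3 : V) : Prop :=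
  [c, x, y, z1, z2, z3].Nodup ∧ (∀ t : V, t ∈ [c, x, y, z1, z2, z3]) ∧
    adjSpec W.G [(c, x), (x, y), (y, c), (c, z1), (z1, z2), (z2, z3), (z3, c)]

/-- `W` is the weighted graph `∞(4,1,4)`: the quadrilaterals `c,x1,x2,x3` and
`c,y1,y2,y3` sharing the vertex `c`. -/
def Inf414Shape {V : Type*} (W : WeightedGraph V) (c x1 x2 x3 y1 y2 y3 : V) : Prop :=
  [c, x1, x2, x3, y1, y2, y3].Nodup ∧ (∀ t : V, t ∈ [c, x1, x2, x3, y1, y2, y3]) ∧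
    adjSpec W.G [(c, x1), (x1, x2), (x2, x3), (x3, c), (c, y1), (y1, y2), (y2, y3), (y3, c)]

section InertiaAux

variable {n : Type*} [Fintype n] [DecidableEq n]

lemma dot_conj (M E : Matrix n n ℝ) (y z : n → ℝ) :
    (E *ᵥ y) ⬝ᵥ M *ᵥ (E *ᵥ z) = y ⬝ᵥ (Eᵀ * M * E) *ᵥ z := by
  rw [mulVec_mulVec, dotProduct_mulVec, dotProduct_mulVec, ← vecMul_vecMul,
    show E *ᵥ y = y ᵥ* Eᵀ by rw [vecMul_transpose], vecMul_vecMul, vecMul_vecMul,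
    Matrix.mul_assoc]

/-- Extension by zero of functions on a subtype, as a linear map. -/
noncomputable def extZero (P : n → Prop) [DecidablePred P] : ({i // P i} → ℝ) →ₗ[ℝ] (n → ℝ) where
  toFun c := fun i => if h : P i then c ⟨i, h⟩ else 0
  map_add' c d := by funext i; by_cases h : P i <;> simp [h]
  map_smul' r c := by funext i; by_cases h : P i <;> simp [h]

lemma extZero_injective (P : n → Prop) [DecidablePred P] : Function.Injective (extZero P) := by
  intro c d h
  funext i
  have := congrFun h i.1
  simpa [extZero, i.2] using this

lemma sum_support_subtype {S : Set n} [DecidablePred (· ∈ S)] {f : n → ℝ}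
    (h : ∀ x, x ∉ S → f x = 0) : ∑ x : n, f x = ∑ x : ↥S, f x.1 := by
  classical
  have h2 : ∑ x ∈ Finset.univ.filter (· ∈ S), f x = ∑ x : ↥S, f x.1 :=
    Finset.sum_subtype _ (fun x => by simp) f
  rw [← h2]
  exact (Finset.sum_filter_of_ne (fun x _ hx => by by_contra hc; exact hx (h x hc))).symm

lemma exists_eigen_subspace {A : Matrix n n ℝ} (hA : A.IsHermitian) (P : n → Prop)
    [DecidablePred P] :
    ∃ W : Submodule ℝ (n → ℝ), Module.finrank ℝ W = Fintype.card {i // P i} ∧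
      ∀ x ∈ W, ∃ c : n → ℝ, (∀ i, ¬ P i → c i = 0) ∧ (x = 0 ∨ c ≠ 0) ∧
        x ⬝ᵥ A *ᵥ x = ∑ i, hA.eigenvalues i * (c i)^2 := by
  classical
  set U : Matrix n n ℝ := (hA.eigenvectorUnitary : Matrix n n ℝ) with hU
  have hU1 : star U * U = 1 := by
    have := hA.eigenvectorUnitary.2
    rw [Unitary.mem_iff] at this
    exact this.1
  have hUD : Uᵀ * A * U = diagonal hA.eigenvalues := by
    have := hA.conjStarAlgAut_star_eigenvectorUnitary
    rw [Unitary.conjStarAlgAut_star_apply] at this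
    rw [show (RCLike.ofReal ∘ hA.eigenvalues : n → ℝ) = hA.eigenvalues from rfl] at this
    rw [star_eq_conjTranspose, conjTranspose_eq_transpose_of_trivial] at this
    convert this using 2
  have hUinj : Function.Injective (fun x : n → ℝ => U *ᵥ x) := by
    intro x y h
    have := congrArg (fun z => star U *ᵥ z) h
    simpa [mulVec_mulVec, hU1] using this
  set L : ({i // P i} → ℝ) →ₗ[ℝ] (n → ℝ) := (mulVecLin U).comp (extZero P) with hL
  have hLinj : Function.Injective L := by
    intro c d h
    exact extZero_injective P (hUinj (by simpa [hL, mulVecLin_apply] using h))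
  refine ⟨LinearMap.range L, ?_, ?_⟩
  · rw [LinearMap.finrank_range_of_inj hLinj, Module.finrank_fintype_fun_eq_card]
  · rintro x ⟨c₀, rfl⟩
    refine ⟨extZero P c₀, fun i hi => by simp [extZero, hi], ?_, ?_⟩
    · by_cases hc : extZero P c₀ = 0
      · left
        show U *ᵥ extZero P c₀ = 0
        rw [hc, mulVec_zero]
      · right; exact hc
    · show (U *ᵥ extZero P c₀) ⬝ᵥ A *ᵥ (U *ᵥ extZero P c₀) = _
      rw [dot_conj, hUD]
      rw [dotProduct]
      refine Finset.sum_congr rfl fun i _ => ?_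
      rw [mulVec_diagonal]
      ring

lemma exists_pos_subspace {A : Matrix n n ℝ} (hA : A.IsHermitian) :
    ∃ W : Submodule ℝ (n → ℝ),
      Module.finrank ℝ W = Fintype.card {i // 0 < hA.eigenvalues i} ∧
      ∀ x ∈ W, x ≠ 0 → 0 < x ⬝ᵥ A *ᵥ x := by
  classical
  obtain ⟨W, hWr, hW⟩ := exists_eigen_subspace hA (fun i => 0 < hA.eigenvalues i)
  refine ⟨W, hWr, fun x hx hx0 => ?_⟩
  obtain ⟨c, hc0, hcx, hq⟩ := hW x hx
  rcases hcx with h | h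
  · exact absurd h hx0
  · rw [hq]
    obtain ⟨j, hj⟩ : ∃ j, c j ≠ 0 := by
      by_contra hco
      push_neg at hco
      exact h (funext hco)
    have hPj : 0 < hA.eigenvalues j := by
      by_contra hP
      exact hj (hc0 j hP)
    refine Finset.sum_pos' (fun i _ => ?_) ⟨j, Finset.mem_univ j, ?_⟩
    · by_cases hP : 0 < hA.eigenvalues i
      · positivity
      · rw [hc0 i hP]; simp
    · have : (c j)^2 > 0 := by positivity
      positivity

lemma exists_nonpos_subspace {A : Matrix n n ℝ} (hA : A.IsHermitian) :
    ∃ W : Submodule ℝ (n → ℝ),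
      Module.finrank ℝ W
        = Fintype.card n - Fintype.card {i // 0 < hA.eigenvalues i} ∧
      ∀ x ∈ W, x ⬝ᵥ A *ᵥ x ≤ 0 := by
  classical
  obtain ⟨W, hWr, hW⟩ := exists_eigen_subspace hA (fun i => ¬ 0 < hA.eigenvalues i)
  refine ⟨W, by rw [hWr]; exact Fintype.card_subtype_compl _, fun x hx => ?_⟩
  obtain ⟨c, hc0, _, hq⟩ := hW x hx
  rw [hq]
  refine Finset.sum_nonpos fun i _ => ?_
  by_cases hP : 0 < hA.eigenvalues i
  · rw [hc0 i (by simpa using hP)]; simp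
  · push_neg at hP
    nlinarith [sq_nonneg (c i)]

lemma exists_neg_subspace {A : Matrix n n ℝ} (hA : A.IsHermitian) :
    ∃ W : Submodule ℝ (n → ℝ),
      Module.finrank ℝ W = Fintype.card {i // hA.eigenvalues i < 0} ∧
      ∀ x ∈ W, x ≠ 0 → x ⬝ᵥ A *ᵥ x < 0 := by
  classical
  obtain ⟨W, hWr, hW⟩ := exists_eigen_subspace hA (fun i => hA.eigenvalues i < 0)
  refine ⟨W, hWr, fun x hx hx0 => ?_⟩
  obtain ⟨c, hc0, hcx, hq⟩ := hW x hx
  rcases hcx with h | h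
  · exact absurd h hx0
  · rw [hq]
    obtain ⟨j, hj⟩ : ∃ j, c j ≠ 0 := by
      by_contra hco
      push_neg at hco
      exact h (funext hco)
    have hPj : hA.eigenvalues j < 0 := by
      by_contra hP
      exact hj (hc0 j hP)
    refine Finset.sum_neg' (fun i _ => ?_) ⟨j, Finset.mem_univ j, ?_⟩
    · by_cases hP : hA.eigenvalues i < 0
      · nlinarith [sq_nonneg (c i)]
      · rw [hc0 i hP]; simp
    · have h2 : (c j)^2 > 0 := by positivity
      nlinarith

lemma exists_nonneg_subspace {A : Matrix n n ℝ} (hA : A.IsHermitian) :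
    ∃ W : Submodule ℝ (n → ℝ),
      Module.finrank ℝ W
        = Fintype.card n - Fintype.card {i // hA.eigenvalues i < 0} ∧
      ∀ x ∈ W, 0 ≤ x ⬝ᵥ A *ᵥ x := by
  classical
  obtain ⟨W, hWr, hW⟩ := exists_eigen_subspace hA (fun i => ¬ hA.eigenvalues i < 0)
  refine ⟨W, by rw [hWr]; exact Fintype.card_subtype_compl _, fun x hx => ?_⟩
  obtain ⟨c, hc0, _, hq⟩ := hW x hx
  rw [hq]
  refine Finset.sum_nonneg fun i _ => ?_
  by_cases hP : hA.eigenvalues i < 0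
  · rw [hc0 i (by simpa using hP)]; simp
  · push_neg at hP
    positivity

lemma finrank_add_le_of_pos_nonpos (A : Matrix n n ℝ) (W W' : Submodule ℝ (n → ℝ))
    (hW : ∀ x ∈ W, x ≠ 0 → 0 < x ⬝ᵥ A *ᵥ x) (hW' : ∀ x ∈ W', x ⬝ᵥ A *ᵥ x ≤ 0) :
    Module.finrank ℝ W + Module.finrank ℝ W' ≤ Fintype.card n := by
  have hd : Disjoint W W' := by
    rw [Submodule.disjoint_def]
    intro x hx hx'
    by_contra h
    exact absurd (hW x hx h) (not_lt.2 (hW' x hx'))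
  have := Submodule.finrank_add_finrank_le_of_disjoint hd
  rwa [Module.finrank_fintype_fun_eq_card] at this

lemma finrank_add_le_of_neg_nonneg (A : Matrix n n ℝ) (W W' : Submodule ℝ (n → ℝ))
    (hW : ∀ x ∈ W, x ≠ 0 → x ⬝ᵥ A *ᵥ x < 0) (hW' : ∀ x ∈ W', 0 ≤ x ⬝ᵥ A *ᵥ x) :
    Module.finrank ℝ W + Module.finrank ℝ W' ≤ Fintype.card n := by
  have hd : Disjoint W W' := by
    rw [Submodule.disjoint_def]
    intro x hx hx'
    by_contra h
    exact absurd (hW' x hx') (not_le.2 (hW x hx h))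
  have := Submodule.finrank_add_finrank_le_of_disjoint hd
  rwa [Module.finrank_fintype_fun_eq_card] at this

/-- Characterization of the positive inertia index via positive/nonpositive subspaces. -/
lemma posInertia_eq {A : Matrix n n ℝ} (hA : A.IsHermitian) (d : ℕ)
    (W W' : Submodule ℝ (n → ℝ))
    (hWr : Module.finrank ℝ W = d) (hW : ∀ x ∈ W, x ≠ 0 → 0 < x ⬝ᵥ A *ᵥ x)
    (hW'r : Module.finrank ℝ W' = Fintype.card n - d) (hdn : d ≤ Fintype.card n)
    (hW' : ∀ x ∈ W', x ⬝ᵥ A *ᵥ x ≤ 0) :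
    posInertia A = d := by
  classical
  rw [posInertia, dif_pos hA]
  obtain ⟨Wp, hWpr, hWp⟩ := exists_pos_subspace hA
  obtain ⟨Wn, hWnr, hWn⟩ := exists_nonpos_subspace hA
  have h1 := finrank_add_le_of_pos_nonpos A W Wn hW hWn
  have h2 := finrank_add_le_of_pos_nonpos A Wp W' hWp hW'
  have hple : Fintype.card {i // 0 < hA.eigenvalues i} ≤ Fintype.card n :=
    Fintype.card_subtype_le _
  omega

/-- Characterization of the negative inertia index via negative/nonnegative subspaces. -/
lemma negInertia_eq {A : Matrix n n ℝ} (hA : A.IsHermitian) (d : ℕ)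
    (W W' : Submodule ℝ (n → ℝ))
    (hWr : Module.finrank ℝ W = d) (hW : ∀ x ∈ W, x ≠ 0 → x ⬝ᵥ A *ᵥ x < 0)
    (hW'r : Module.finrank ℝ W' = Fintype.card n - d) (hdn : d ≤ Fintype.card n)
    (hW' : ∀ x ∈ W', 0 ≤ x ⬝ᵥ A *ᵥ x) :
    negInertia A = d := by
  classical
  rw [negInertia, dif_pos hA]
  obtain ⟨Wp, hWpr, hWp⟩ := exists_neg_subspace hA
  obtain ⟨Wn, hWnr, hWn⟩ := exists_nonneg_subspace hA
  have h1 := finrank_add_le_of_neg_nonneg A W Wn hW hWn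
  have h2 := finrank_add_le_of_neg_nonneg A Wp W' hWp hW'
  have hple : Fintype.card {i // hA.eigenvalues i < 0} ≤ Fintype.card n :=
    Fintype.card_subtype_le _
  omega

lemma vecMulVec_mul_left (A : Matrix n n ℝ) (s c : n → ℝ) :
    A * vecMulVec s c = vecMulVec (A *ᵥ s) c := by
  ext i j
  simp only [mul_apply, vecMulVec_apply, mulVec, dotProduct, Finset.sum_mul]
  exact Finset.sum_congr rfl fun z _ => by ring

lemma vecMulVec_mul_right (c s : n → ℝ) (A : Matrix n n ℝ) :
    vecMulVec c s * A = vecMulVec c (s ᵥ* A) := by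
  ext i j
  simp only [mul_apply, vecMulVec_apply, vecMul, dotProduct, Finset.mul_sum]
  exact Finset.sum_congr rfl fun z _ => by ring

lemma vecMulVec_mul_vecMulVec (s c s' c' : n → ℝ) :
    vecMulVec s c * vecMulVec s' c' = (c ⬝ᵥ s') • vecMulVec s c' := by
  ext i j
  simp only [mul_apply, vecMulVec_apply, Matrix.smul_apply, dotProduct, Finset.sum_mul, smul_eq_mul]
  exact Finset.sum_congr rfl fun z _ => by ring

lemma vecMulVec_transpose (s c : n → ℝ) : (vecMulVec s c)ᵀ = vecMulVec c s := by
  ext i j; simp [vecMulVec_apply, mul_comm]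

lemma vecMulVec_smul_left' (a : ℝ) (s c : n → ℝ) :
    vecMulVec (a • s) c = a • vecMulVec s c := by
  ext i j; simp [vecMulVec_apply, mul_assoc]

lemma vecMulVec_smul_right' (a : ℝ) (s c : n → ℝ) :
    vecMulVec s (a • c) = a • vecMulVec s c := by
  ext i j
  simp only [vecMulVec_apply, Matrix.smul_apply, Pi.smul_apply, smul_eq_mul]
  ring

lemma adjMatrix_isHermitian' {V : Type*} [Fintype V] [DecidableEq V] (W : WeightedGraph V) :
    W.adjMatrix.IsHermitian := by
  ext i j
  simp only [conjTranspose_apply, WeightedGraph.adjMatrix, star_trivial]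
  by_cases h : W.G.Adj j i
  · rw [if_pos h, if_pos (h.symm), W.symm]
  · rw [if_neg h, if_neg (fun h' => h h'.symm)]

lemma sup_subspace {V : Type*} [Fintype V] [DecidableEq V] (D : Matrix V V ℝ)
    (S : Set V) [DecidablePred (· ∈ S)] (u v : V) (hu : u ∉ S) (hv : v ∉ S) (huv : u ≠ v)
    (hS : ∀ x, x ∈ S ∨ x = u ∨ x = v)
    (B : Matrix ↥S ↥S ℝ) (hDS : ∀ x y : ↥S, D x.1 y.1 = B x y)
    (h1 : ∀ x : ↥S, D x.1 u = 0) (h2 : ∀ x : ↥S, D x.1 v = 0)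
    (h3 : ∀ x : ↥S, D u x.1 = 0) (h4 : ∀ x : ↥S, D v x.1 = 0)
    (h5 : D u u = 0) (h6 : D v v = 0)
    (ε : ℝ) (Wb : Submodule ℝ (↥S → ℝ)) :
    ∃ Wv : Submodule ℝ (V → ℝ), Module.finrank ℝ Wv = Module.finrank ℝ Wb + 1 ∧
      ∀ x ∈ Wv, ∃ (c : ↥S → ℝ) (t : ℝ), c ∈ Wb ∧ (c = 0 ∧ t = 0 → x = 0) ∧
        x ⬝ᵥ D *ᵥ x = c ⬝ᵥ B *ᵥ c + (ε * (D u v + D v u)) * t^2 := by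
  classical
  set E : (↥S → ℝ) →ₗ[ℝ] (V → ℝ) := extZero (· ∈ S) with hE
  set s : V → ℝ := (Pi.single u 1 : V → ℝ) + ε • (Pi.single v 1 : V → ℝ) with hs
  have hsu : s u = 1 := by simp [hs, Pi.single_apply, huv, Ne.symm huv]
  have hsv : s v = ε := by simp [hs, Pi.single_apply, huv, Ne.symm huv]
  have hsx : ∀ x : ↥S, s x.1 = 0 := by
    intro x
    have hxu : (x : V) ≠ u := fun h => hu (h ▸ x.2)
    have hxv : (x : V) ≠ v := fun h => hv (h ▸ x.2)
    simp [hs, Pi.single_apply, hxu, hxv]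
  have hEu : ∀ c, E c u = 0 := fun c => dif_neg hu
  have hEv : ∀ c, E c v = 0 := fun c => dif_neg hv
  have hEx : ∀ c (x : ↥S), E c x.1 = c x := by
    intro c x
    show (if h : (x : V) ∈ S then c ⟨x, h⟩ else 0) = c x
    rw [dif_pos x.2]
  have hEz : ∀ c (z : V), z ∉ S → E c z = 0 := fun c z hz => dif_neg hz
  have hsne : s ≠ 0 := fun h => by simpa [hsu] using congrFun h u
  refine ⟨(Wb.map E) ⊔ Submodule.span ℝ {s}, ?_, ?_⟩
  · have hdisj : Disjoint (Wb.map E) (Submodule.span ℝ {s}) := by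
      rw [Submodule.disjoint_def]
      rintro x ⟨c, -, rfl⟩ hx2
      obtain ⟨t, ht⟩ := Submodule.mem_span_singleton.mp hx2
      have ht0 : t = 0 := by simpa [hEu, hsu] using congrFun ht u
      rw [← ht, ht0, zero_smul]
    have h := Submodule.finrank_sup_add_finrank_inf_eq (Wb.map E) (Submodule.span ℝ {s})
    rw [hdisj.eq_bot, finrank_bot, add_zero, finrank_span_singleton hsne] at h
    rw [h]
    congr 1
    exact (LinearEquiv.finrank_eq (Submodule.equivMapOfInjective E (extZero_injective _) Wb)).symm
  · intro x hx
    obtain ⟨y, hy, w, hw, rfl⟩ := Submodule.mem_sup.mp hx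
    obtain ⟨c, hc, rfl⟩ := hy
    obtain ⟨t, rfl⟩ := Submodule.mem_span_singleton.mp hw
    refine ⟨c, t, hc, ?_, ?_⟩
    · rintro ⟨rfl, rfl⟩
      simp
    · have hmulE : ∀ x₀ : ↥S, (D *ᵥ E c) x₀.1 = (B *ᵥ c) x₀ := by
        intro x₀
        show ∑ z, D x₀.1 z * E c z = ∑ z, B x₀ z * c z
        rw [sum_support_subtype (S := S) (fun z hz => by rw [hEz c z hz, mul_zero])]
        exact Finset.sum_congr rfl fun z _ => by rw [hDS, hEx]
      have ee : E c ⬝ᵥ D *ᵥ E c = c ⬝ᵥ B *ᵥ c := by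
        show ∑ x₀, E c x₀ * (D *ᵥ E c) x₀ = ∑ x₀, c x₀ * (B *ᵥ c) x₀
        rw [sum_support_subtype (S := S) (fun z hz => by rw [hEz c z hz, zero_mul])]
        exact Finset.sum_congr rfl fun z _ => by rw [hEx, hmulE]
      have eDu : E c ⬝ᵥ (fun x₀ => D x₀ u * 1) = 0 := by
        refine Finset.sum_eq_zero fun z _ => ?_
        rcases hS z with h | h | h
        · show E c z * (D z u * 1) = 0
          rw [h1 ⟨z, h⟩, zero_mul, mul_zero]
        · subst h; rw [hEu, zero_mul]
        · subst h; rw [hEv, zero_mul]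
      have eDv : E c ⬝ᵥ (fun x₀ => D x₀ v * 1) = 0 := by
        refine Finset.sum_eq_zero fun z _ => ?_
        rcases hS z with h | h | h
        · show E c z * (D z v * 1) = 0
          rw [h2 ⟨z, h⟩, zero_mul, mul_zero]
        · subst h; rw [hEu, zero_mul]
        · subst h; rw [hEv, zero_mul]
      have es : E c ⬝ᵥ D *ᵥ s = 0 := by
        have hcol : ∀ w, D *ᵥ Pi.single w (1:ℝ) = fun x₀ => D x₀ w * 1 := fun w => by
          ext; simp
        rw [hs, mulVec_add, mulVec_smul, dotProduct_add, dotProduct_smul, hcol,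
          hcol, eDu, eDv, smul_zero, add_zero]
      have hDEu : (D *ᵥ E c) u = 0 := by
        refine Finset.sum_eq_zero fun z _ => ?_
        rcases hS z with h | h | h
        · show D u z * E c z = 0
          rw [h3 ⟨z, h⟩, zero_mul]
        · subst h; rw [hEu, mul_zero]
        · subst h; rw [hEv, mul_zero]
      have hDEv : (D *ᵥ E c) v = 0 := by
        refine Finset.sum_eq_zero fun z _ => ?_
        rcases hS z with h | h | h
        · show D v z * E c z = 0
          rw [h4 ⟨z, h⟩, zero_mul]
        · subst h; rw [hEu, mul_zero]
        · subst h; rw [hEv, mul_zero]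
      have se : s ⬝ᵥ D *ᵥ E c = 0 := by
        rw [hs, add_dotProduct, smul_dotProduct, single_dotProduct, single_dotProduct,
          hDEu, hDEv]
        simp
      have ss : s ⬝ᵥ D *ᵥ s = ε * (D u v + D v u) := by
        have hcol : ∀ w, D *ᵥ Pi.single w (1:ℝ) = fun x₀ => D x₀ w * 1 := fun w => by
          ext; simp
        rw [hs, mulVec_add, mulVec_smul, hcol, hcol]
        simp only [add_dotProduct, smul_dotProduct, dotProduct_add, dotProduct_smul,
          single_dotProduct, smul_eq_mul]
        rw [h5, h6]
        ring
      show (E c + t • s) ⬝ᵥ D *ᵥ (E c + t • s) = _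
      rw [mulVec_add, mulVec_smul, dotProduct_add, add_dotProduct, add_dotProduct,
        dotProduct_smul, smul_dotProduct, smul_dotProduct, dotProduct_smul]
      simp only [smul_eq_mul]
      rw [ee, es, se, ss]
      ring

lemma map_congr_subspace {V : Type*} [Fintype V] [DecidableEq V]
    (A E E' D : Matrix V V ℝ) (hE : E' * E = 1) (hD : Eᵀ * A * E = D)
    (W : Submodule ℝ (V → ℝ)) :
    ∃ W' : Submodule ℝ (V → ℝ), Module.finrank ℝ W' = Module.finrank ℝ W ∧
      ∀ y ∈ W', ∃ x ∈ W, (x = 0 → y = 0) ∧ y ⬝ᵥ A *ᵥ y = x ⬝ᵥ D *ᵥ x := by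
  have hinj : Function.Injective (mulVecLin E) := by
    intro x y h
    have := congrArg (fun z => E' *ᵥ z) h
    simpa [mulVecLin_apply, mulVec_mulVec, hE] using this
  refine ⟨W.map (mulVecLin E),
    (LinearEquiv.finrank_eq (Submodule.equivMapOfInjective _ hinj W)).symm, ?_⟩
  rintro y ⟨x, hx, rfl⟩
  refine ⟨x, hx, fun h => by simp [mulVecLin_apply, h], ?_⟩
  show (E *ᵥ x) ⬝ᵥ A *ᵥ (E *ᵥ x) = _
  rw [dot_conj, hD]

open Classical in
lemma adjMatrix_apply' {V : Type*} [Fintype V] [DecidableEq V] (W : WeightedGraph V) (x y : V) :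
    W.adjMatrix x y = if W.G.Adj x y then W.w x y else 0 := rfl

lemma adjMatrix_of_adj {V : Type*} [Fintype V] [DecidableEq V] (W : WeightedGraph V) {x y : V}
    (h : W.G.Adj x y) : W.adjMatrix x y = W.w x y := by
  rw [adjMatrix_apply', if_pos h]

lemma adjMatrix_of_not_adj {V : Type*} [Fintype V] [DecidableEq V] (W : WeightedGraph V) {x y : V}
    (h : ¬ W.G.Adj x y) : W.adjMatrix x y = 0 := by
  rw [adjMatrix_apply', if_neg h]

end InertiaAux

set_option maxHeartbeats 1000000

/-- deleting a pendant vertex `v` together with its unique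
neighbor `u` decreases both the positive and the negative inertia index by
exactly one. -/
theorem stmt16 {V : Type*} [Fintype V] [DecidableEq V] (W : WeightedGraph V)
    (u v : V) (hpend : W.G.neighborSet v = {u}) :
    W.iPos = (W.induce {x : V | x ≠ u ∧ x ≠ v}).iPos + 1 ∧
    W.iNeg = (W.induce {x : V | x ≠ u ∧ x ≠ v}).iNeg + 1 := by
  have hAdjvu : W.G.Adj v u := by
    rw [← SimpleGraph.mem_neighborSet, hpend]
    exact Set.mem_singleton u
  have hadj : ∀ x, W.G.Adj v x ↔ x = u := fun x => by
    rw [← SimpleGraph.mem_neighborSet, hpend, Set.mem_singleton_iff]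
  have huv : u ≠ v := (hAdjvu.ne).symm
  set a : ℝ := W.w v u with ha_def
  have ha : 0 < a := W.pos v u hAdjvu
  set A : Matrix V V ℝ := W.adjMatrix with hA_def
  have hherm : A.IsHermitian := adjMatrix_isHermitian' W
  have hAsymm : ∀ x y, A x y = A y x := by
    intro x y
    rw [hA_def]
    by_cases h : W.G.Adj x y
    · rw [adjMatrix_of_adj W h, adjMatrix_of_adj W h.symm, W.symm]
    · rw [adjMatrix_of_not_adj W h, adjMatrix_of_not_adj W (fun h' => h h'.symm)]
  have hAvx : ∀ x, A v x = if x = u then a else 0 := by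
    intro x
    rw [hA_def]
    by_cases h : x = u
    · subst h
      rw [if_pos rfl]
      exact adjMatrix_of_adj W hAdjvu
    · rw [if_neg h]
      exact adjMatrix_of_not_adj W (fun hc => h ((hadj x).mp hc))
  have hAxv : ∀ x, A x v = if x = u then a else 0 := fun x => by rw [hAsymm x v, hAvx]
  have hAuu : A u u = 0 := by
    rw [hA_def]
    exact adjMatrix_of_not_adj W (W.G.loopless.irrefl u)
  set S : Set V := {x : V | x ≠ u ∧ x ≠ v} with hS_def
  have hmemS : ∀ x, x ∈ S ↔ (x ≠ u ∧ x ≠ v) := fun x => Iff.rfl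
  have hu_nin : u ∉ S := fun h => (h.1) rfl
  have hv_nin : v ∉ S := fun h => (h.2) rfl
  have hS : ∀ x, x ∈ S ∨ x = u ∨ x = v := by
    intro x
    by_cases h1 : x = u
    · exact Or.inr (Or.inl h1)
    · by_cases h2 : x = v
      · exact Or.inr (Or.inr h2)
      · exact Or.inl ⟨h1, h2⟩
  set B : Matrix ↥S ↥S ℝ := (W.induce S).adjMatrix with hB_def
  have hBherm : B.IsHermitian := adjMatrix_isHermitian' _
  have hBA : ∀ x y : ↥S, B x y = A x.1 y.1 := by
    intro x y
    rw [hB_def, hA_def]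
    have hiff : (W.induce S).G.Adj x y ↔ W.G.Adj x.1 y.1 := Iff.rfl
    by_cases h : W.G.Adj x.1 y.1
    · rw [adjMatrix_of_adj _ (hiff.mpr h), adjMatrix_of_adj W h]
      rfl
    · rw [adjMatrix_of_not_adj _ (fun hc => h (hiff.mp hc)), adjMatrix_of_not_adj W h]
  -- the congruence matrices
  set pu : V → ℝ := Pi.single u 1 with hpu_def
  set sv : V → ℝ := Pi.single v 1 with hsv_def
  have hpuu : pu u = 1 := by simp [hpu_def]
  have hpuv : pu v = 0 := by simp [hpu_def, Pi.single_apply, Ne.symm huv]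
  have hpux : ∀ x, x ≠ u → pu x = 0 := fun x hx => by simp [hpu_def, Pi.single_apply, hx]
  set cc : V → ℝ := fun x => if x = u ∨ x = v then 0 else a⁻¹ * A x u with hcc_def
  have hccu : cc u = 0 := if_pos (Or.inl rfl)
  have hccv : cc v = 0 := if_pos (Or.inr rfl)
  have hccS : ∀ x : ↥S, cc x.1 = a⁻¹ * A x.1 u := fun x =>
    if_neg (by rw [not_or]; exact ⟨x.2.1, x.2.2⟩)
  have hAsv : A *ᵥ sv = a • pu := by
    rw [hsv_def]
    funext x
    rw [show (A *ᵥ Pi.single v (1:ℝ)) x = A x v * 1 by simp]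
    rw [hAxv]
    by_cases h : x = u
    · subst h; simp [hpu_def]
    · simp [hpu_def, Pi.single_apply, h]
  have hsvA : sv ᵥ* A = a • pu := by
    rw [hsv_def]
    funext x
    rw [show (Pi.single v (1:ℝ) ᵥ* A) x = 1 * A v x by simp]
    rw [hAvx]
    by_cases h : x = u
    · subst h; simp [hpu_def]
    · simp [hpu_def, Pi.single_apply, h]
  set Y : Matrix V V ℝ := vecMulVec sv cc with hY_def
  set Em : Matrix V V ℝ := 1 - Y with hEm_def
  set Em' : Matrix V V ℝ := 1 + Y with hEm'_def
  have hYY : Y * Y = 0 := by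
    rw [hY_def, _root_.vecMulVec_mul_vecMulVec]
    have : cc ⬝ᵥ sv = 0 := by rw [hsv_def, dotProduct_single, hccv, zero_mul]
    rw [this, zero_smul]
  have hEE : Em' * Em = 1 := by
    have h : Em' * Em = 1 - Y * Y := by rw [hEm_def, hEm'_def]; noncomm_ring
    rw [h, hYY, sub_zero]
  set Dm : Matrix V V ℝ := A - a • vecMulVec pu cc - a • vecMulVec cc pu with hDm_def
  have hconj : Emᵀ * A * Em = Dm := by
    have ht : Emᵀ = 1 - vecMulVec cc sv := by
      rw [hEm_def, transpose_sub, transpose_one, hY_def, vecMulVec_transpose]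
    have hAY : A * Y = a • vecMulVec pu cc := by
      rw [hY_def, vecMulVec_mul_left, hAsv, vecMulVec_smul_left']
    have hYA : vecMulVec cc sv * A = a • vecMulVec cc pu := by
      rw [vecMulVec_mul_right, hsvA, vecMulVec_smul_right']
    have hYAY : vecMulVec cc sv * A * Y = 0 := by
      have hps : pu ⬝ᵥ sv = 0 := by rw [hsv_def, dotProduct_single, hpuv, zero_mul]
      rw [hYA, hY_def, smul_mul_assoc, _root_.vecMulVec_mul_vecMulVec, hps, zero_smul, smul_zero]
    calc Emᵀ * A * Em = (1 - vecMulVec cc sv) * A * (1 - Y) := by rw [ht, hEm_def]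
      _ = A - A * Y - (vecMulVec cc sv * A - vecMulVec cc sv * A * Y) := by noncomm_ring
      _ = Dm := by rw [hYAY, hAY, hYA, sub_zero, hDm_def]
  have hDapp : ∀ x y, Dm x y = A x y - a * (pu x * cc y) - a * (cc x * pu y) := by
    intro x y
    rw [hDm_def]
    simp [vecMulVec_apply]
  -- entries of Dm
  have hd1 : ∀ x : ↥S, Dm x.1 u = 0 := by
    intro x
    rw [hDapp, hpux x.1 x.2.1, hccu, hccS, hpuu]
    field_simp
    ring
  have hd2 : ∀ x : ↥S, Dm x.1 v = 0 := by
    intro x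
    rw [hDapp, hpux x.1 x.2.1, hccv, hpuv, hAxv, if_neg x.2.1]
    ring
  have hd3 : ∀ x : ↥S, Dm u x.1 = 0 := by
    intro x
    rw [hDapp, hpuu, hccu, hccS, hpux x.1 x.2.1, hAsymm u x.1]
    field_simp
    ring
  have hd4 : ∀ x : ↥S, Dm v x.1 = 0 := by
    intro x
    rw [hDapp, hpuv, hccv, hAvx, if_neg (fun h => x.2.1 h)]
    ring
  have hd5 : Dm u u = 0 := by rw [hDapp, hAuu, hccu]; ring
  have hd6 : Dm v v = 0 := by rw [hDapp, hpuv, hccv, hAxv, if_neg (Ne.symm huv)]; ring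
  have hduv : Dm u v = a := by rw [hDapp, hccv, hpuv, hAxv, if_pos rfl]; ring
  have hdvu : Dm v u = a := by rw [hDapp, hpuv, hccv, hAvx, if_pos rfl]; ring
  have hdS : ∀ x y : ↥S, Dm x.1 y.1 = B x y := by
    intro x y
    rw [hDapp, hpux x.1 x.2.1, hpux y.1 y.2.1, hBA]
    ring
  -- cardinalities
  have hcard : Fintype.card ↥S + 2 = Fintype.card V := by
    have h1 : Fintype.card ↥S = (Finset.univ.filter (· ∈ S)).card :=
      Fintype.card_subtype _
    have h2 : Finset.univ.filter (· ∈ S) = Finset.univ \ {u, v} := by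
      ext x
      simp only [Finset.mem_filter, Finset.mem_univ, true_and, Finset.mem_sdiff,
        Finset.mem_insert, Finset.mem_singleton]
      rw [hmemS]
      tauto
    have hcard2 : ({u, v} : Finset V).card = 2 := by
      rw [Finset.card_insert_of_notMem (by simp [huv]), Finset.card_singleton]
    have h3 := Finset.card_sdiff_add_card_eq_card (Finset.subset_univ ({u, v} : Finset V))
    rw [hcard2] at h3
    rw [h1, h2]
    simpa [Finset.card_univ] using h3
  -- positive part
  set pB : ℕ := Fintype.card {i // 0 < hBherm.eigenvalues i} with hpB_def
  have hpBle : pB ≤ Fintype.card ↥S := Fintype.card_subtype_le _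
  obtain ⟨Wb1, hWb1r, hWb1⟩ := exists_pos_subspace hBherm
  obtain ⟨Wv1, hWv1r, hWv1⟩ :=
    sup_subspace Dm S u v hu_nin hv_nin huv hS B hdS hd1 hd2 hd3 hd4 hd5 hd6 1 Wb1
  obtain ⟨Wa1, hWa1r, hWa1⟩ := map_congr_subspace A Em Em' Dm hEE hconj Wv1
  have hWa1pos : ∀ y ∈ Wa1, y ≠ 0 → 0 < y ⬝ᵥ A *ᵥ y := by
    intro y hy hy0
    obtain ⟨x, hx, hx0, hq⟩ := hWa1 y hy
    obtain ⟨c, t, hcWb, hct, hq2⟩ := hWv1 x hx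
    rw [hq, hq2, hduv, hdvu]
    have hx0' : x ≠ 0 := fun h => hy0 (hx0 h)
    by_cases hc : c = 0
    · have ht : t ≠ 0 := fun h => hx0' (hct ⟨hc, h⟩)
      subst hc
      have ht2 : 0 < t^2 := by positivity
      simp only [zero_dotProduct, mulVec_zero, dotProduct_zero]
      nlinarith
    · have hp := hWb1 c hcWb hc
      nlinarith [sq_nonneg t]
  obtain ⟨Wb2, hWb2r, hWb2⟩ := exists_nonpos_subspace hBherm
  obtain ⟨Wv2, hWv2r, hWv2⟩ :=
    sup_subspace Dm S u v hu_nin hv_nin huv hS B hdS hd1 hd2 hd3 hd4 hd5 hd6 (-1) Wb2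
  obtain ⟨Wa2, hWa2r, hWa2⟩ := map_congr_subspace A Em Em' Dm hEE hconj Wv2
  have hWa2nonpos : ∀ y ∈ Wa2, y ⬝ᵥ A *ᵥ y ≤ 0 := by
    intro y hy
    obtain ⟨x, hx, hx0, hq⟩ := hWa2 y hy
    obtain ⟨c, t, hcWb, hct, hq2⟩ := hWv2 x hx
    rw [hq, hq2, hduv, hdvu]
    have hnp := hWb2 c hcWb
    nlinarith [sq_nonneg t]
  have hposA : posInertia A = pB + 1 := by
    refine posInertia_eq hherm (pB + 1) Wa1 Wa2 ?_ hWa1pos ?_ (by omega) hWa2nonpos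
    · rw [hWa1r, hWv1r, hWb1r]
    · rw [hWa2r, hWv2r, hWb2r]
      omega
  -- negative part
  set nB : ℕ := Fintype.card {i // hBherm.eigenvalues i < 0} with hnB_def
  have hnBle : nB ≤ Fintype.card ↥S := Fintype.card_subtype_le _
  obtain ⟨Wb3, hWb3r, hWb3⟩ := exists_neg_subspace hBherm
  obtain ⟨Wv3, hWv3r, hWv3⟩ :=
    sup_subspace Dm S u v hu_nin hv_nin huv hS B hdS hd1 hd2 hd3 hd4 hd5 hd6 (-1) Wb3
  obtain ⟨Wa3, hWa3r, hWa3⟩ := map_congr_subspace A Em Em' Dm hEE hconj Wv3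
  have hWa3neg : ∀ y ∈ Wa3, y ≠ 0 → y ⬝ᵥ A *ᵥ y < 0 := by
    intro y hy hy0
    obtain ⟨x, hx, hx0, hq⟩ := hWa3 y hy
    obtain ⟨c, t, hcWb, hct, hq2⟩ := hWv3 x hx
    rw [hq, hq2, hduv, hdvu]
    have hx0' : x ≠ 0 := fun h => hy0 (hx0 h)
    by_cases hc : c = 0
    · have ht : t ≠ 0 := fun h => hx0' (hct ⟨hc, h⟩)
      subst hc
      have ht2 : 0 < t^2 := by positivity
      simp only [zero_dotProduct, mulVec_zero, dotProduct_zero]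
      nlinarith
    · have hp := hWb3 c hcWb hc
      nlinarith [sq_nonneg t]
  obtain ⟨Wb4, hWb4r, hWb4⟩ := exists_nonneg_subspace hBherm
  obtain ⟨Wv4, hWv4r, hWv4⟩ :=
    sup_subspace Dm S u v hu_nin hv_nin huv hS B hdS hd1 hd2 hd3 hd4 hd5 hd6 1 Wb4
  obtain ⟨Wa4, hWa4r, hWa4⟩ := map_congr_subspace A Em Em' Dm hEE hconj Wv4
  have hWa4nonneg : ∀ y ∈ Wa4, 0 ≤ y ⬝ᵥ A *ᵥ y := by
    intro y hy
    obtain ⟨x, hx, hx0, hq⟩ := hWa4 y hy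
    obtain ⟨c, t, hcWb, hct, hq2⟩ := hWv4 x hx
    rw [hq, hq2, hduv, hdvu]
    have hnn := hWb4 c hcWb
    nlinarith [sq_nonneg t]
  have hnegA : negInertia A = nB + 1 := by
    refine negInertia_eq hherm (nB + 1) Wa3 Wa4 ?_ hWa3neg ?_ (by omega) hWa4nonneg
    · rw [hWa3r, hWv3r, hWb3r]
    · rw [hWa4r, hWv4r, hWb4r]
      omega
  constructor
  · show posInertia A = posInertia B + 1
    rw [hposA, posInertia, dif_pos hBherm]
  · show negInertia A = negInertia B + 1
    rw [hnegA, negInertia, dif_pos hBherm]
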